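/- Let a < 0, D > 0 and 4D - T² > 0, and W(y) = Dy² - aTy + a². Then lim_{u→+∞} ∫_{-u}^{u} (-y/W(y)) dy = πT/(D√(4D - T²)). More generally, for a ≠ 0 and 4D - T² > 0, the limit equals -πT·sign(a)/(D√(4D - T²)). -/

import Mathlib

open Real Set Filter intervalIntegral

set_option maxHeartbeats 1000000 in
theorem limit_g_at_infinity (a T D : ℝ) (ha : a ≠ 0) (h : 4 * D - T ^ 2 > 0)
    (W : ℝ → ℝ) (hW : ∀ y, W y = D * y ^ 2 - a * T * y + a ^ 2) :
    Tendsto (fun u : ℝ => ∫ y in (-u)..u, -y / W y) atTop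
      (nhds (-(π * T * Real.sign a) / (D * Real.sqrt (4 * D - T ^ 2)))) := by
  simp only [hW]
  have hD : 0 < D := by nlinarith [sq_nonneg T]
  have hΔ : 0 < Real.sqrt (4 * D - T ^ 2) := Real.sqrt_pos.mpr h
  set s : ℝ := |a| * Real.sqrt (4 * D - T ^ 2) with hs
  have hsp : 0 < s := mul_pos (abs_pos.mpr ha) hΔ
  have ha2 : 0 < a ^ 2 * (4 * D - T ^ 2) := mul_pos (by positivity) h
  have hWpos : ∀ y : ℝ, 0 < D * y ^ 2 - a * T * y + a ^ 2 := by
    intro y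
    nlinarith [sq_nonneg (2 * D * y - a * T)]
  have key : s ^ 2 = a ^ 2 * (4 * D - T ^ 2) := by
    rw [hs, mul_pow, sq_abs, Real.sq_sqrt h.le]
  set F : ℝ → ℝ := fun y =>
    -(1 / (2 * D)) * Real.log (D * y ^ 2 - a * T * y + a ^ 2)
      - (a * T / (D * s)) * Real.arctan ((2 * D * y - a * T) / s) with hF
  have hderiv : ∀ y : ℝ, HasDerivAt F (-y / (D * y ^ 2 - a * T * y + a ^ 2)) y := by
    intro y
    have hWd : HasDerivAt (fun y : ℝ => D * y ^ 2 - a * T * y + a ^ 2)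
        (2 * D * y - a * T) y := by
      have h1 := (hasDerivAt_pow 2 y).const_mul D
      have h2 := (hasDerivAt_id y).const_mul (a * T)
      have h3 := (h1.sub h2).add_const (a ^ 2)
      refine HasDerivAt.congr_deriv h3 ?_
      ring
    have hlog := (Real.hasDerivAt_log (hWpos y).ne').comp y hWd
    have hinner : HasDerivAt (fun y : ℝ => (2 * D * y - a * T) / s) (2 * D / s) y := by
      have := (((hasDerivAt_id y).const_mul (2 * D)).sub_const (a * T)).div_const s
      refine HasDerivAt.congr_deriv this ?_
      ring
    have harc := (Real.hasDerivAt_arctan ((2 * D * y - a * T) / s)).comp y hinner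
    have hfull := (hlog.const_mul (-(1 / (2 * D)))).sub (harc.const_mul (a * T / (D * s)))
    refine HasDerivAt.congr_deriv hfull ?_
    have hW' := (hWpos y).ne'
    have hq : 1 + ((2 * D * y - a * T) / s) ^ 2
        = 4 * D * (D * y ^ 2 - a * T * y + a ^ 2) / s ^ 2 := by
      field_simp
      linear_combination key
    rw [hq]
    field_simp
    ring
  have hcont : Continuous fun y : ℝ => -y / (D * y ^ 2 - a * T * y + a ^ 2) :=
    Continuous.div (by continuity) (by continuity) fun y => (hWpos y).ne'
  have hint : ∀ u : ℝ, (∫ y in (-u)..u, -y / (D * y ^ 2 - a * T * y + a ^ 2)) = F u - F (-u) :=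
    fun u => intervalIntegral.integral_eq_sub_of_hasDerivAt (fun y _ => hderiv y)
      (hcont.intervalIntegrable _ _)
  have hlin : Tendsto (fun u : ℝ => (2 * D * u - a * T) / s) atTop atTop := by
    apply Tendsto.atTop_div_const hsp
    apply tendsto_atTop_add_const_right
    exact Tendsto.const_mul_atTop (by positivity) tendsto_id
  have hlin4 : Tendsto (fun u : ℝ => (2 * D * u + a * T) / s) atTop atTop := by
    apply Tendsto.atTop_div_const hsp
    apply tendsto_atTop_add_const_right
    exact Tendsto.const_mul_atTop (by positivity) tendsto_id
  have hlin' : Tendsto (fun u : ℝ => (2 * D * (-u) - a * T) / s) atTop atBot := by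
    apply (tendsto_neg_atTop_atBot.comp hlin4).congr
    intro u
    simp only [Function.comp_apply]
    ring
  have t2 : Tendsto (fun u : ℝ => Real.arctan ((2 * D * u - a * T) / s)) atTop (nhds (π / 2)) :=
    (Real.tendsto_arctan_atTop.mono_right nhdsWithin_le_nhds).comp hlin
  have t3 : Tendsto (fun u : ℝ => Real.arctan ((2 * D * (-u) - a * T) / s)) atTop
      (nhds (-(π / 2))) :=
    (Real.tendsto_arctan_atBot.mono_right nhdsWithin_le_nhds).comp hlin'
  have tratio : Tendsto (fun u : ℝ => (D * u ^ 2 - a * T * u + a ^ 2) /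
      (D * (-u) ^ 2 - a * T * (-u) + a ^ 2)) atTop (nhds 1) := by
    have h1 : Tendsto (fun u : ℝ => a * T / u) atTop (nhds 0) := by
      simpa using tendsto_const_nhds.div_atTop (tendsto_id (α := ℝ))
    have h2 : Tendsto (fun u : ℝ => a ^ 2 / u ^ 2) atTop (nhds 0) := by
      apply tendsto_const_nhds.div_atTop
      exact tendsto_pow_atTop two_ne_zero
    have hnum : Tendsto (fun u : ℝ => D - a * T / u + a ^ 2 / u ^ 2) atTop (nhds D) := by
      simpa using (tendsto_const_nhds.sub h1).add h2
    have hden : Tendsto (fun u : ℝ => D + a * T / u + a ^ 2 / u ^ 2) atTop (nhds D) := by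
      simpa using (tendsto_const_nhds.add h1).add h2
    have hdiv := hnum.div hden hD.ne'
    rw [div_self hD.ne'] at hdiv
    apply hdiv.congr'
    filter_upwards [eventually_gt_atTop 0] with u hu
    have hu' : u ≠ 0 := hu.ne'
    have hB : (0:ℝ) < D * (-u) ^ 2 - a * T * (-u) + a ^ 2 := hWpos (-u)
    simp only [Pi.div_apply]
    have hC : (0:ℝ) < D + a * T / u + a ^ 2 / u ^ 2 := by
      have hrw : D + a * T / u + a ^ 2 / u ^ 2
          = (D * (-u) ^ 2 - a * T * (-u) + a ^ 2) / u ^ 2 := by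
        field_simp
        ring
      rw [hrw]
      positivity
    rw [div_eq_div_iff hC.ne' hB.ne']
    field_simp
    ring
  have t1 : Tendsto (fun u : ℝ => Real.log (D * u ^ 2 - a * T * u + a ^ 2)
      - Real.log (D * (-u) ^ 2 - a * T * (-u) + a ^ 2)) atTop (nhds 0) := by
    have hlog1 : Tendsto (fun u : ℝ => Real.log ((D * u ^ 2 - a * T * u + a ^ 2) /
        (D * (-u) ^ 2 - a * T * (-u) + a ^ 2))) atTop (nhds 0) := by
      have := (Real.continuousAt_log one_ne_zero).tendsto.comp tratio
      simpa [Function.comp_def] using this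
    apply hlog1.congr
    intro u
    rw [Real.log_div (hWpos u).ne' (hWpos (-u)).ne']
  have tmain : Tendsto (fun u : ℝ => F u - F (-u)) atTop
      (nhds (-(π * T * Real.sign a) / (D * Real.sqrt (4 * D - T ^ 2)))) := by
    have hcomb := (t1.const_mul (-(1 / (2 * D)))).sub ((t2.sub t3).const_mul (a * T / (D * s)))
    have heq : (fun u : ℝ => -(1 / (2 * D)) * (Real.log (D * u ^ 2 - a * T * u + a ^ 2)
        - Real.log (D * (-u) ^ 2 - a * T * (-u) + a ^ 2))
        - (a * T / (D * s)) * (Real.arctan ((2 * D * u - a * T) / s)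
          - Real.arctan ((2 * D * (-u) - a * T) / s)))
        = fun u : ℝ => F u - F (-u) := by
      funext u
      simp only [hF]
      ring
    rw [heq] at hcomb
    convert hcomb using 2
    rw [hs]
    rcases lt_or_gt_of_ne ha with hneg | hpos
    · rw [Real.sign_of_neg hneg, abs_of_neg hneg]
      field_simp
      ring
    · rw [Real.sign_of_pos hpos, abs_of_pos hpos]
      field_simp
      ring
  exact tmain.congr fun u => (hint u).symm
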